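/- Let (M₁, L₁, R₁, ε₁) and (M₂, L₂, R₂, ε₂) be composable G-spans (V₁ = H₂), let d be an object of T, and let a₁, a₂ be objects of M₁, M₂ such that R₁a₁ and L₂a₂ lie in the same connected component of T as d, and let g ∈ G. Then the composition map (t₁,t₂) ↦ t₂ ∘ t₁ from the set of pairs (t₁,t₂) ∈ T(R₁a₁, d) × T(d, L₂a₂) with (ε₂(a₂)·H₂(t₂))·(V₁(t₁)·ε₁(a₁)) = g onto the set {t ∈ T(R₁a₁, L₂a₂) : ε₂(a₂)·V₁(t)·ε₁(a₁) = g} is surjective and every fibre has exactly |Aut_T(d)| elements; in particular every morphism t : R₁a₁ → L₂a₂ admits exactly |Aut_T(d)| factorizations t = t₂ ∘ t₁ through d. -/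

import Mathlib

open CategoryTheory

noncomputable section

/-- The component set `π₀(C)`: isomorphism classes of objects of `C`. -/
abbrev Pi0 (C : Type*) [Category C] := Quotient (isIsomorphicSetoid C)

/-- Groupoid cardinality (Euler characteristic): the sum, over a set of representatives of
the isomorphism classes of objects, of the reciprocals of the orders of the automorphism
groups. -/
noncomputable def gcard (C : Type*) [Category C] : ℚ :=
  ∑ᶠ x : Pi0 C, (Nat.card (Aut (Quotient.out x)) : ℚ)⁻¹

/-- A functor into the one-object groupoid `BG`, identified with an assignment of elements
of `G` to morphisms (composition goes to multiplication in reverse order, matching the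
convention `f ≫ g ↦ g·f` of `BG`). -/
structure GFunctor (S : Type*) [Category S] (G : Type*) [Group G] where
  map : ∀ {a b : S}, (a ⟶ b) → G
  map_id : ∀ a : S, map (𝟙 a) = 1
  map_comp : ∀ {a b c : S} (f : a ⟶ b) (g : b ⟶ c), map (f ≫ g) = map g * map f

/-- The two-sided homotopy fibre `c\M/d` of a span `S ⟵L M ⟶R T`: objects are triples
`(s, a, t)` with `s : c ⟶ L a` and `t : R a ⟶ d`; morphisms are morphisms `m : a₁ ⟶ a₂`
of `M` with `L m ∘ s₁ = s₂` and `t₂ ∘ R m = t₁`. -/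
abbrev TwoFibre {S T M : Type*} [Category S] [Category T] [Category M]
    (L : M ⥤ S) (R : M ⥤ T) (c : S) (d : T) :=
  StructuredArrow c (CostructuredArrow.proj R d ⋙ L)

/-- The induced function `c\ε/d` on the two-sided homotopy fibre:
`(s,a,t) ↦ V(t)·ε(a)·H(s)`. -/
def twoEps {S T M : Type*} [Category S] [Category T] [Category M]
    {G : Type*} [Group G] (H : GFunctor S G) (V : GFunctor T G)
    (L : M ⥤ S) (R : M ⥤ T) (ε : M → G) {c : S} {d : T}
    (x : TwoFibre L R c d) : G :=
  V.map x.right.hom * ε x.right.left * H.map x.hom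

/-- The matrix `[M, ε] : π₀(S) × π₀(T) → ℚG` of a `G`-span:
`[M,ε](c,d) = |Aut_T(d)|⁻¹ · ∑_{g ∈ G} χ((c\M/d){c\ε/d = g}) · g`. -/
noncomputable def spanMatrix {S T M : Type*} [Category S] [Category T] [Category M]
    {G : Type*} [CommGroup G] [Fintype G]
    (H : GFunctor S G) (V : GFunctor T G)
    (L : M ⥤ S) (R : M ⥤ T) (ε : M → G)
    (c : Pi0 S) (d : Pi0 T) : MonoidAlgebra ℚ G :=
  ∑ g : G, MonoidAlgebra.single g
    ((Nat.card (Aut (Quotient.out d)) : ℚ)⁻¹ *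
      gcard (ObjectProperty.FullSubcategory
        (fun x : TwoFibre L R (Quotient.out c) (Quotient.out d) =>
          twoEps H V L R ε x = g)))

/-- The composition map `(t₁,t₂) ↦ t₂ ∘ t₁` from
`{(t₁,t₂) ∈ T(a,d) × T(d,b) : (e₂·V(t₂))·(V(t₁)·e₁) = g}` to
`{t ∈ T(a,b) : e₂·V(t)·e₁ = g}` (here `e₁ = ε₁(a₁)` and `e₂ = ε₂(a₂)`). -/
def compMap {T : Type*} [Groupoid T] {G : Type*} [CommGroup G]
    (V₁ : GFunctor T G) (e₁ e₂ : G) (a b d : T) (g : G) :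
    {p : (a ⟶ d) × (d ⟶ b) // e₂ * V₁.map p.2 * (V₁.map p.1 * e₁) = g} →
      {t : a ⟶ b // e₂ * V₁.map t * e₁ = g} :=
  fun p => ⟨p.1.1 ≫ p.1.2, by
    have h := p.2
    rw [V₁.map_comp]
    simpa [mul_assoc] using h⟩

/-- Factorizations of `t : a ⟶ b` through `d` biject with `d ⟶ d`, given `a ≅ d`. -/
def factorEquiv {T : Type*} [Groupoid T] {a b d : T} (φ : a ≅ d) (t : a ⟶ b) :
    {p : (a ⟶ d) × (d ⟶ b) // p.1 ≫ p.2 = t} ≃ (d ⟶ d) where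
  toFun p := φ.inv ≫ p.1.1
  invFun α := ⟨(φ.hom ≫ α, Groupoid.inv (φ.hom ≫ α) ≫ t), by simp⟩
  left_inv p := by
    obtain ⟨⟨t₁, t₂⟩, h⟩ := p
    apply Subtype.ext
    dsimp at h ⊢
    have h1 : φ.hom ≫ φ.inv ≫ t₁ = t₁ := by simp
    refine Prod.ext h1 ?_
    rw [h1, ← h]
    simp
  right_inv α := by simp

theorem natCard_factor {T : Type*} [Groupoid T] {a b d : T} (φ : a ≅ d) (t : a ⟶ b) :
    Nat.card {p : (a ⟶ d) × (d ⟶ b) // p.1 ≫ p.2 = t} = Nat.card (Aut d) := by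
  rw [Nat.card_congr (factorEquiv φ t)]
  exact (Nat.card_congr (Groupoid.isoEquivHom d d)).symm

/-- For composable `G`-spans `(M₁,L₁,R₁,ε₁) : (S₁,H₁) → (T,V₁)` and
`(M₂,L₂,R₂,ε₂) : (T,V₁) → (S₂,V₂)`, an object `d` of `T`, and objects `a₁` of `M₁`,
`a₂` of `M₂` with `R₁a₁` and `L₂a₂` in the same connected component of `T` as `d`,
and every `g ∈ G`: the composition map
`(t₁,t₂) ↦ t₂∘t₁ : {(t₁,t₂) : (ε₂(a₂)·V₁(t₂))·(V₁(t₁)·ε₁(a₁)) = g}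
  → {t : R₁a₁ ⟶ L₂a₂ : ε₂(a₂)·V₁(t)·ε₁(a₁) = g}`
is surjective and each of its fibres has exactly `|Aut_T(d)|` elements; in particular every
`t : R₁a₁ ⟶ L₂a₂` admits exactly `|Aut_T(d)|` factorizations `t = t₂ ∘ t₁` through `d`. -/
theorem stmt4 {S₁ T S₂ M₁ M₂ : Type*}
    [Groupoid S₁] [Groupoid T] [Groupoid S₂] [Groupoid M₁] [Groupoid M₂]
    [Finite S₁] [∀ a b : S₁, Finite (a ⟶ b)]
    [Finite T] [∀ a b : T, Finite (a ⟶ b)]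
    [Finite S₂] [∀ a b : S₂, Finite (a ⟶ b)]
    [Finite M₁] [∀ a b : M₁, Finite (a ⟶ b)]
    [Finite M₂] [∀ a b : M₂, Finite (a ⟶ b)]
    {G : Type*} [CommGroup G] [Fintype G]
    (H₁ : GFunctor S₁ G) (V₁ : GFunctor T G) (V₂ : GFunctor S₂ G)
    (L₁ : M₁ ⥤ S₁) (R₁ : M₁ ⥤ T) (L₂ : M₂ ⥤ T) (R₂ : M₂ ⥤ S₂)
    (ε₁ : M₁ → G) (ε₂ : M₂ → G)
    (hε₁ : ∀ {a b : M₁} (m : a ⟶ b), ε₁ b * H₁.map (L₁.map m) = V₁.map (R₁.map m) * ε₁ a)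
    (hε₂ : ∀ {a b : M₂} (m : a ⟶ b), ε₂ b * V₁.map (L₂.map m) = V₂.map (R₂.map m) * ε₂ a)
    (d : T) (a₁ : M₁) (a₂ : M₂)
    (h₁ : Nonempty (R₁.obj a₁ ≅ d)) (h₂ : Nonempty (L₂.obj a₂ ≅ d)) (g : G) :
    Function.Surjective (compMap V₁ (ε₁ a₁) (ε₂ a₂) (R₁.obj a₁) (L₂.obj a₂) d g) ∧
      (∀ b : {t : R₁.obj a₁ ⟶ L₂.obj a₂ // ε₂ a₂ * V₁.map t * ε₁ a₁ = g},
        Nat.card {p // compMap V₁ (ε₁ a₁) (ε₂ a₂) (R₁.obj a₁) (L₂.obj a₂) d g p = b} =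
          Nat.card (Aut d)) ∧
      ∀ t : R₁.obj a₁ ⟶ L₂.obj a₂,
        Nat.card {p : (R₁.obj a₁ ⟶ d) × (d ⟶ L₂.obj a₂) // p.1 ≫ p.2 = t} =
          Nat.card (Aut d) := by
  obtain ⟨φ⟩ := h₁
  refine ⟨?_, ?_, fun t => natCard_factor φ t⟩
  · rintro ⟨t, ht⟩
    have hv : V₁.map (φ.inv ≫ t) * V₁.map φ.hom = V₁.map t := by
      rw [← V₁.map_comp, Iso.hom_inv_id_assoc]
    refine ⟨⟨(φ.hom, φ.inv ≫ t), ?_⟩, ?_⟩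
    · rw [← mul_assoc, mul_assoc (ε₂ a₂), hv]
      exact ht
    · apply Subtype.ext
      simp [compMap]
  · intro b
    have e : {p // compMap V₁ (ε₁ a₁) (ε₂ a₂) (R₁.obj a₁) (L₂.obj a₂) d g p = b} ≃
        {q : (R₁.obj a₁ ⟶ d) × (d ⟶ L₂.obj a₂) // q.1 ≫ q.2 = b.1} :=
      { toFun := fun p => ⟨p.1.1, by
          have := congrArg Subtype.val p.2
          simpa [compMap] using this⟩
        invFun := fun q => ⟨⟨q.1, by
            have hv : V₁.map q.1.2 * V₁.map q.1.1 = V₁.map b.1 := by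
              rw [← V₁.map_comp, q.2]
            rw [← mul_assoc, mul_assoc (ε₂ a₂), hv]
            exact b.2⟩, by
          apply Subtype.ext
          simpa [compMap] using q.2⟩
        left_inv := fun p => Subtype.ext (Subtype.ext rfl)
        right_inv := fun q => Subtype.ext rfl }
    rw [Nat.card_congr e, natCard_factor φ b.1]

end
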